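/- Let λ1, λ2 be nonnegative integers, θ a real number with sin θ ≠ 0, and t a real number with |t| < 1. Then Θ_{λ1}(θ)·Θ_{λ2}(θ) = ( cos((λ1−λ2)θ) − Re( e^{i(λ1+λ2+2)θ}·(1 − t·e^{−2iθ})/(1 − t·e^{2iθ}) ) ) / ( 2·sin²θ·(1 − 2t·cos(2θ) + t²) ). -/

import Mathlib

/-- The SU(2) deformed character of weight `l` at parameter `t` and angle `θ`:
`Θ_λ(θ) = (sin((λ+1)θ) − t·sin((λ−1)θ)) / (sin θ · (1 − 2t·cos(2θ) + t²))`,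
where `λ − 1` is interpreted as an integer. -/
noncomputable def Theta (t θ : ℝ) (l : ℕ) : ℝ :=
  (Real.sin (((l : ℝ) + 1) * θ) - t * Real.sin ((((l : ℤ) - 1 : ℤ) : ℝ) * θ)) /
    (Real.sin θ * (1 - 2 * t * Real.cos (2 * θ) + t ^ 2))

/-- Product formula for two SU(2) deformed characters:
`Θ_{λ1}(θ)·Θ_{λ2}(θ) = (cos((λ1−λ2)θ) − Re(e^{i(λ1+λ2+2)θ}(1 − t e^{−2iθ})/(1 − t e^{2iθ})))
  / (2 sin²θ (1 − 2t cos(2θ) + t²))`. -/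
lemma key_poly (s1 c1 s2 c2 s c t : ℝ) (h : s^2 + c^2 = 1) :
    2*(((s1*c+c1*s) - t*(s1*c-c1*s)) * ((s2*c+c2*s) - t*(s2*c-c2*s))) =
      (c1*c2+s1*s2)*(1 - 2*t*(2*c^2-1) + t^2)
      - (((c1*c2-s1*s2)*(2*c^2-1) - (s1*c2+c1*s2)*(2*s*c))*((1-t*(2*c^2-1))^2 - t^2*(2*s*c)^2)
         - ((s1*c2+c1*s2)*(2*c^2-1) + (c1*c2-s1*s2)*(2*s*c))*(2*t*(2*s*c)*(1-t*(2*c^2-1)))) := by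
  linear_combination (2*c1*c2 + 4*c1*c2*t + 2*c1*c2*t^2 - 8*c1*c2*c^2*t - 4*c1*c2*c^2*t^2
    + 8*c1*c2*c^4*t^2 + 8*c1*s2*s*c^3*t^2 + 8*s1*c2*s*c^3*t^2 + 8*s1*s2*c^2*t
    + 4*s1*s2*c^2*t^2 - 8*s1*s2*c^4*t^2) * h

theorem deformed_character_product (l1 l2 : ℕ) (θ t : ℝ)
    (hθ : Real.sin θ ≠ 0) (ht : |t| < 1) :
    Theta t θ l1 * Theta t θ l2 =
      (Real.cos ((((l1 : ℤ) - (l2 : ℤ) : ℤ) : ℝ) * θ) -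
          (Complex.exp (Complex.I * ((l1 : ℂ) + (l2 : ℂ) + 2) * (θ : ℂ)) *
              (1 - (t : ℂ) * Complex.exp (-2 * Complex.I * (θ : ℂ))) /
              (1 - (t : ℂ) * Complex.exp (2 * Complex.I * (θ : ℂ)))).re) /
        (2 * Real.sin θ ^ 2 * (1 - 2 * t * Real.cos (2 * θ) + t ^ 2)) := by
  obtain ⟨ht1, ht2⟩ := abs_lt.mp ht
  have hpyth := Real.sin_sq_add_cos_sq θ
  have hpyth2 := Real.sin_sq_add_cos_sq (2*θ)
  have htc : t * Real.cos (2*θ) ≤ |t| := by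
    calc t * Real.cos (2*θ) ≤ |t * Real.cos (2*θ)| := le_abs_self _
    _ = |t| * |Real.cos (2*θ)| := abs_mul _ _
    _ ≤ |t| * 1 := by gcongr; exact Real.abs_cos_le_one _
    _ = |t| := mul_one _
  have hD : 0 < 1 - 2 * t * Real.cos (2 * θ) + t ^ 2 := by
    nlinarith [sq_nonneg (1 - |t|), sq_abs t, abs_nonneg t]
  have hre : (Complex.exp (Complex.I * ((l1 : ℂ) + (l2 : ℂ) + 2) * (θ : ℂ)) *
              (1 - (t : ℂ) * Complex.exp (-2 * Complex.I * (θ : ℂ))) /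
              (1 - (t : ℂ) * Complex.exp (2 * Complex.I * (θ : ℂ)))).re =
      (Real.cos (((l1:ℝ)+(l2:ℝ)+2)*θ) * ((1 - t*Real.cos (2*θ))^2 - t^2*Real.sin (2*θ)^2)
        - Real.sin (((l1:ℝ)+(l2:ℝ)+2)*θ) * (2*t*Real.sin (2*θ)*(1 - t*Real.cos (2*θ))))
      / (1 - 2*t*Real.cos (2*θ) + t^2) := by
    simp only [Complex.div_re, Complex.mul_re, Complex.mul_im, Complex.exp_re, Complex.exp_im,
      Complex.normSq_apply, Complex.add_re, Complex.add_im, Complex.sub_re, Complex.sub_im,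
      Complex.one_re, Complex.one_im, Complex.I_re, Complex.I_im, Complex.ofReal_re,
      Complex.ofReal_im, Complex.natCast_re, Complex.natCast_im, Complex.neg_re, Complex.neg_im,
      Complex.re_ofNat, Complex.im_ofNat, Real.exp_zero, Real.cos_neg, Real.sin_neg,
      mul_zero, zero_mul, mul_one, one_mul,
      zero_add, add_zero, sub_zero, zero_sub, neg_zero, neg_neg, neg_mul]
    rw [← add_div, div_eq_div_iff (by nlinarith [sq_nonneg (1 - t*Real.cos (2*θ))]) hD.ne']
    linear_combination (-(Real.cos (((l1:ℝ)+(l2:ℝ)+2)*θ) * ((1 - t*Real.cos (2*θ))^2 - t^2*Real.sin (2*θ)^2)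
        - Real.sin (((l1:ℝ)+(l2:ℝ)+2)*θ) * (2*t*Real.sin (2*θ)*(1 - t*Real.cos (2*θ)))) * t^2) * hpyth2
  rw [Theta, Theta, hre]
  push_cast
  have e1 : Real.sin (((l1:ℝ)+1)*θ) = Real.sin ((l1:ℝ)*θ) * Real.cos θ + Real.cos ((l1:ℝ)*θ) * Real.sin θ := by
    rw [show ((l1:ℝ)+1)*θ = (l1:ℝ)*θ + θ by ring, Real.sin_add]
  have e1' : Real.sin (((l2:ℝ)+1)*θ) = Real.sin ((l2:ℝ)*θ) * Real.cos θ + Real.cos ((l2:ℝ)*θ) * Real.sin θ := by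
    rw [show ((l2:ℝ)+1)*θ = (l2:ℝ)*θ + θ by ring, Real.sin_add]
  have e2 : Real.sin (((l1:ℝ)-1)*θ) = Real.sin ((l1:ℝ)*θ) * Real.cos θ - Real.cos ((l1:ℝ)*θ) * Real.sin θ := by
    rw [show ((l1:ℝ)-1)*θ = (l1:ℝ)*θ - θ by ring, Real.sin_sub]
  have e2' : Real.sin (((l2:ℝ)-1)*θ) = Real.sin ((l2:ℝ)*θ) * Real.cos θ - Real.cos ((l2:ℝ)*θ) * Real.sin θ := by
    rw [show ((l2:ℝ)-1)*θ = (l2:ℝ)*θ - θ by ring, Real.sin_sub]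
  have e3 : Real.cos (((l1:ℝ)-(l2:ℝ))*θ) = Real.cos ((l1:ℝ)*θ) * Real.cos ((l2:ℝ)*θ) + Real.sin ((l1:ℝ)*θ) * Real.sin ((l2:ℝ)*θ) := by
    rw [show ((l1:ℝ)-(l2:ℝ))*θ = (l1:ℝ)*θ - (l2:ℝ)*θ by ring, Real.cos_sub]
  have e4 : Real.cos (((l1:ℝ)+(l2:ℝ)+2)*θ) =
      (Real.cos ((l1:ℝ)*θ) * Real.cos ((l2:ℝ)*θ) - Real.sin ((l1:ℝ)*θ) * Real.sin ((l2:ℝ)*θ)) * Real.cos (2*θ)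
      - (Real.sin ((l1:ℝ)*θ) * Real.cos ((l2:ℝ)*θ) + Real.cos ((l1:ℝ)*θ) * Real.sin ((l2:ℝ)*θ)) * Real.sin (2*θ) := by
    rw [show ((l1:ℝ)+(l2:ℝ)+2)*θ = ((l1:ℝ)*θ + (l2:ℝ)*θ) + 2*θ by ring, Real.cos_add,
      Real.cos_add, Real.sin_add]
  have e5 : Real.sin (((l1:ℝ)+(l2:ℝ)+2)*θ) =
      (Real.sin ((l1:ℝ)*θ) * Real.cos ((l2:ℝ)*θ) + Real.cos ((l1:ℝ)*θ) * Real.sin ((l2:ℝ)*θ)) * Real.cos (2*θ)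
      + (Real.cos ((l1:ℝ)*θ) * Real.cos ((l2:ℝ)*θ) - Real.sin ((l1:ℝ)*θ) * Real.sin ((l2:ℝ)*θ)) * Real.sin (2*θ) := by
    rw [show ((l1:ℝ)+(l2:ℝ)+2)*θ = ((l1:ℝ)*θ + (l2:ℝ)*θ) + 2*θ by ring, Real.sin_add,
      Real.cos_add, Real.sin_add]
  rw [e1, e1', e2, e2', e3, e4, e5, Real.cos_two_mul, Real.sin_two_mul]
  have hk := key_poly (Real.sin ((l1:ℝ)*θ)) (Real.cos ((l1:ℝ)*θ)) (Real.sin ((l2:ℝ)*θ))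
    (Real.cos ((l2:ℝ)*θ)) (Real.sin θ) (Real.cos θ) t hpyth
  have hDne : (1 - 2 * t * Real.cos (2*θ) + t ^ 2) ≠ 0 := hD.ne'
  rw [Real.cos_two_mul] at hDne
  rw [div_mul_div_comm, sub_div' hDne, div_div, div_eq_div_iff (by simp [hθ, hDne]) (by simp [hθ, hDne])]
  linear_combination (Real.sin θ ^ 2 * (1 - 2*t*(2*Real.cos θ^2-1) + t^2) ^ 2) * hk
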